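/- Every U√Δ-ring R has no non-trivial central idempotents: if e is a central idempotent of R, then e = 0 or e = 1. -/

import Mathlib

/-- Δ(R) = {x : 1 - x*u is a unit for every unit u}. -/
def Delta (R : Type*) [Ring R] : Set R :=
  {x | ∀ u : R, IsUnit u → IsUnit (1 - x * u)}

/-- √Δ(R) = {x : x^n ∈ Δ(R) for some n ≥ 1}. -/
def sqrtDelta (R : Type*) [Ring R] : Set R :=
  {x | ∃ n : ℕ, 1 ≤ n ∧ x ^ n ∈ Delta R}

/-- R is a U√Δ-ring if every non-unit is a product of a unit and an element of √Δ(R). -/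
def IsUSqrtDeltaRing (R : Type*) [Ring R] : Prop :=
  ∀ a : R, ¬ IsUnit a → ∃ u b : R, IsUnit u ∧ b ∈ sqrtDelta R ∧ a = u * b

lemma idem_unit_eq_one {R : Type*} [Ring R] {a : R} (hu : IsUnit a) (ha : a * a = a) :
    a = 1 := by
  obtain ⟨w, rfl⟩ := hu
  have := congrArg (fun x => (↑w⁻¹ : R) * x) ha
  simpa [mul_assoc] using this

lemma pow_mul_idem {R : Type*} [Ring R] {e : R} (he : e * e = e)
    (hc : ∀ r : R, e * r = r * e) (c : R) : ∀ n, 1 ≤ n → (c * e) ^ n = c ^ n * e := by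
  intro n hn
  induction n with
  | zero => omega
  | succ m ih =>
    rcases Nat.eq_zero_or_pos m with h | h
    · subst h; simp
    · rw [pow_succ, ih h, pow_succ, mul_assoc, mul_assoc]
      congr 1
      calc e * (c * e) = (e * c) * e := by rw [mul_assoc]
        _ = (c * e) * e := by rw [hc]
        _ = c * e := by rw [mul_assoc, he]

theorem stmt_12 {R : Type*} [Ring R] (hR : IsUSqrtDeltaRing R) (e : R)
    (he : e * e = e) (hc : ∀ r : R, e * r = r * e) : e = 0 ∨ e = 1 := by
  by_cases hu : IsUnit e
  · exact Or.inr (idem_unit_eq_one hu he)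
  · left
    obtain ⟨u, b, huu, ⟨n, hn, hΔ⟩, hab⟩ := hR e hu
    obtain ⟨v, rfl⟩ := huu
    have hb : b = (↑v⁻¹ : R) * e := by
      have := congrArg (fun x => (↑v⁻¹ : R) * x) hab
      simpa [mul_assoc] using this.symm
    have hbn : b ^ n = (↑v⁻¹ : R) ^ n * e := by
      rw [hb]; exact pow_mul_idem he hc _ n hn
    have h1 : IsUnit (1 - e) := by
      have := hΔ ((↑v : R) ^ n) ((v : Rˣ).isUnit.pow n)
      rw [hbn] at this
      have heq : (↑v⁻¹ : R) ^ n * e * (↑v : R) ^ n = e := by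
        rw [mul_assoc, hc, ← mul_assoc]
        rw [← Units.val_pow_eq_pow_val, ← Units.val_pow_eq_pow_val, ← Units.val_mul, inv_pow, inv_mul_cancel, Units.val_one, one_mul]
      rwa [heq] at this
    have h1e : (1 - e) * (1 - e) = 1 - e := by
      rw [sub_mul, mul_sub, mul_sub, he]; simp
    exact sub_eq_self.mp (idem_unit_eq_one h1 h1e)
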